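/- For α ∈ [1,2) with α ≠ 1 (or taking appropriate limits for α = 1), the second derivative of the CTS moment generating function satisfies lim_{s→0⁺} s^{2−α}·M''_{CTS}(λ₊ − s) = M_{CTS}(λ₊)/(λ₊^{α−2}+λ₋^{α−2}). -/

import Mathlib

open Filter Topology

/-- for α ∈ (1,2),
lim_{s→0⁺} s^{2−α}·M''_{CTS}(λ₊ − s) = M_{CTS}(λ₊)/(λ₊^{α−2}+λ₋^{α−2}). -/
theorem mgfCTS_second_deriv_tail (α lp lm : ℝ) (hα : α ∈ Set.Ioo (1:ℝ) 2)
    (hlp : 0 < lp) (hlm : 0 < lm)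
    (PhiH : ℝ → ℝ)
    (hPhiH : PhiH = fun u =>
      ((lp - u) ^ α - lp ^ α + (lm + u) ^ α - lm ^ α) /
        (α * (α - 1) * (lp ^ (α - 2) + lm ^ (α - 2))) +
      u * (lp ^ (α - 1) - lm ^ (α - 1)) / ((α - 1) * (lp ^ (α - 2) + lm ^ (α - 2))))
    (M : ℝ → ℝ) (hM : M = fun u => Real.exp (PhiH u)) :
    Tendsto (fun s : ℝ => s ^ (2 - α) * deriv (deriv M) (lp - s)) (𝓝[>] 0)
      (𝓝 (M lp / (lp ^ (α - 2) + lm ^ (α - 2)))) := by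
  obtain ⟨hα1, hα2⟩ := hα
  have hα0 : (0:ℝ) < α := by linarith
  have hαne : α ≠ 0 := ne_of_gt hα0
  have hα1pos : (0:ℝ) < α - 1 := by linarith
  have hα1ne : α - 1 ≠ 0 := ne_of_gt hα1pos
  set D : ℝ := lp ^ (α-2) + lm ^ (α-2) with hDdef
  have hD : 0 < D := by positivity
  have hDne : D ≠ 0 := ne_of_gt hD
  set P1 : ℝ → ℝ := fun u =>
    (((lm+u)^(α-1) - (lp-u)^(α-1)) + (lp^(α-1) - lm^(α-1))) / ((α-1)*D) with hP1
  set P2 : ℝ → ℝ := fun u => ((lp-u)^(α-2) + (lm+u)^(α-2)) / D with hP2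
  -- raw derivative of PhiH (valid everywhere since 1 ≤ α)
  have hPhiRaw : ∀ u : ℝ, HasDerivAt PhiH
      ((α * (lp-u)^(α-1) * (-1) + α * (lm+u)^(α-1) * 1) / (α * (α-1) * D) +
        (lp^(α-1) - lm^(α-1)) / ((α-1) * D)) u := by
    intro u
    have hid1 : HasDerivAt (fun u:ℝ => lp - u) (-1) u := (hasDerivAt_id u).const_sub lp
    have hid2 : HasDerivAt (fun u:ℝ => lm + u) 1 u := (hasDerivAt_id u).const_add lm
    have h1 : HasDerivAt (fun u:ℝ => (lp-u)^α) (α * (lp-u)^(α-1) * (-1)) u := by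
      simpa [Function.comp_def] using (Real.hasDerivAt_rpow_const (x := lp - u) (p := α)
        (Or.inr hα1.le)).comp u hid1
    have h2 : HasDerivAt (fun u:ℝ => (lm+u)^α) (α * (lm+u)^(α-1) * 1) u := by
      simpa [Function.comp_def] using (Real.hasDerivAt_rpow_const (x := lm + u) (p := α)
        (Or.inr hα1.le)).comp u hid2
    have hN : HasDerivAt (fun u:ℝ => (lp - u) ^ α - lp ^ α + (lm + u) ^ α - lm ^ α)
        (α * (lp-u)^(α-1) * (-1) + α * (lm+u)^(α-1) * 1) u := by
      simpa using ((h1.sub_const (lp^α)).add h2).sub_const (lm^α)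
    have hlin : HasDerivAt (fun u:ℝ => u * (lp^(α-1) - lm^(α-1)) / ((α-1) * D))
        ((lp^(α-1) - lm^(α-1)) / ((α-1) * D)) u := by
      simpa using ((hasDerivAt_id u).mul_const (lp^(α-1) - lm^(α-1))).div_const ((α-1) * D)
    rw [hPhiH]
    exact (hN.div_const (α * (α-1) * D)).add hlin
  have hPhi' : ∀ u ∈ Set.Ioo (-lm) lp, HasDerivAt PhiH (P1 u) u := by
    intro u hu
    have := hPhiRaw u
    have heq : (α * (lp-u)^(α-1) * (-1) + α * (lm+u)^(α-1) * 1) / (α * (α-1) * D) +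
        (lp^(α-1) - lm^(α-1)) / ((α-1) * D) = P1 u := by
      rw [hP1]
      field_simp
      ring
    rwa [heq] at this
  have hMd : ∀ u ∈ Set.Ioo (-lm) lp, HasDerivAt M (M u * P1 u) u := by
    intro u hu
    rw [hM]
    exact ((Real.hasDerivAt_exp (PhiH u)).comp u (hPhi' u hu))
  have hP1d : ∀ u ∈ Set.Ioo (-lm) lp, HasDerivAt P1 (P2 u) u := by
    intro u hu
    have hlpu : (0:ℝ) < lp - u := by simp only [Set.mem_Ioo] at hu; linarith [hu.2]
    have hlmu : (0:ℝ) < lm + u := by simp only [Set.mem_Ioo] at hu; linarith [hu.1]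
    have hid1 : HasDerivAt (fun u:ℝ => lp - u) (-1) u := (hasDerivAt_id u).const_sub lp
    have hid2 : HasDerivAt (fun u:ℝ => lm + u) 1 u := (hasDerivAt_id u).const_add lm
    have h1 : HasDerivAt (fun u:ℝ => (lp-u)^(α-1)) ((α-1) * (lp-u)^(α-2) * (-1)) u := by
      have := (Real.hasDerivAt_rpow_const (x := lp - u) (p := α - 1)
        (Or.inl hlpu.ne')).comp u hid1
      simpa [show α - 1 - 1 = α - 2 by ring, Function.comp_def] using this
    have h2 : HasDerivAt (fun u:ℝ => (lm+u)^(α-1)) ((α-1) * (lm+u)^(α-2) * 1) u := by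
      have := (Real.hasDerivAt_rpow_const (x := lm + u) (p := α - 1)
        (Or.inl hlmu.ne')).comp u hid2
      simpa [show α - 1 - 1 = α - 2 by ring, Function.comp_def] using this
    have hbig : HasDerivAt P1
        (((α-1) * (lm+u)^(α-2) * 1 - (α-1) * (lp-u)^(α-2) * (-1)) / ((α-1)*D)) u := by
      rw [hP1]
      exact (((h2.sub h1).add_const (lp^(α-1) - lm^(α-1))).div_const ((α-1)*D))
    have heq : ((α-1) * (lm+u)^(α-2) * 1 - (α-1) * (lp-u)^(α-2) * (-1)) / ((α-1)*D)
        = P2 u := by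
      rw [hP2]
      field_simp
      ring
    rwa [heq] at hbig
  -- key formula for the second derivative on the open interval
  have hkey : ∀ u ∈ Set.Ioo (-lm) lp,
      deriv (deriv M) u = M u * ((P1 u)^2 + P2 u) := by
    intro u hu
    have hev : deriv M =ᶠ[𝓝 u] fun v => M v * P1 v := by
      filter_upwards [isOpen_Ioo.mem_nhds hu] with v hv
      exact (hMd v hv).deriv
    have h2d : HasDerivAt (fun v => M v * P1 v)
        (M u * P1 u * P1 u + M u * P2 u) u := (hMd u hu).mul (hP1d u hu)
    rw [hev.deriv_eq, h2d.deriv]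
    ring
  -- membership eventually
  have hmem : ∀ᶠ s in 𝓝[>] (0:ℝ), s ∈ Set.Ioo (0:ℝ) (lp + lm) :=
    Ioo_mem_nhdsGT_of_mem ⟨le_refl 0, by linarith⟩
  -- the function eventually equals a nicer form
  have heq : ∀ᶠ s in 𝓝[>] (0:ℝ),
      s ^ (2 - α) * deriv (deriv M) (lp - s) =
      M (lp - s) * (s ^ (2-α) * (P1 (lp - s))^2 +
        (1 + s ^ (2-α) * (lm + (lp - s)) ^ (α-2)) / D) := by
    filter_upwards [hmem] with s hs
    have hs0 : 0 < s := hs.1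
    have hmem2 : lp - s ∈ Set.Ioo (-lm) lp := by
      constructor <;> [linarith [hs.2]; linarith [hs.1]]
    rw [hkey _ hmem2]
    have hpow : s ^ (2-α) * s ^ (α-2) = 1 := by
      rw [← Real.rpow_add hs0]
      norm_num
    rw [hP2]
    simp only [sub_sub_cancel]
    linear_combination (M (lp - s) / D) * hpow
  have hsub : Tendsto (fun s : ℝ => lp - s) (𝓝[>] (0:ℝ)) (𝓝 lp) := by
    have h : Tendsto (fun s : ℝ => lp - s) (𝓝 (0:ℝ)) (𝓝 (lp - 0)) :=
      tendsto_const_nhds.sub tendsto_id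
    simpa using h.mono_left (nhdsWithin_le_nhds : 𝓝[>] (0:ℝ) ≤ 𝓝 0)
  have hMc : ContinuousAt M lp := by
    rw [hM]
    exact Real.continuous_exp.continuousAt.comp (hPhiRaw lp).continuousAt
  have T1 : Tendsto (fun s : ℝ => M (lp - s)) (𝓝[>] (0:ℝ)) (𝓝 (M lp)) :=
    hMc.tendsto.comp hsub
  have hrpow0 : Tendsto (fun s : ℝ => s ^ (2-α)) (𝓝[>] (0:ℝ)) (𝓝 0) := by
    have h2α : (0:ℝ) ≤ 2 - α := by linarith
    have := (Real.continuousAt_rpow_const 0 (2-α) (Or.inr h2α)).tendsto.mono_left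
      (nhdsWithin_le_nhds : 𝓝[>] (0:ℝ) ≤ 𝓝 0)
    simpa [Real.zero_rpow (show 2 - α ≠ 0 by linarith)] using this
  have c1 : ContinuousAt (fun u : ℝ => lm + u) lp := by fun_prop
  have c2 : ContinuousAt (fun u : ℝ => lp - u) lp := by fun_prop
  have c1' : ContinuousAt (fun u : ℝ => (lm+u)^(α-1)) lp :=
    c1.rpow_const (Or.inr hα1pos.le)
  have c2' : ContinuousAt (fun u : ℝ => (lp-u)^(α-1)) lp :=
    c2.rpow_const (Or.inr hα1pos.le)
  have hP1c : ContinuousAt P1 lp := by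
    rw [hP1]
    exact ((c1'.sub c2').add continuousAt_const).div_const _
  have T2 : Tendsto (fun s : ℝ => s ^ (2-α) * (P1 (lp - s))^2) (𝓝[>] (0:ℝ))
      (𝓝 (0 * (P1 lp)^2)) :=
    hrpow0.mul ((hP1c.tendsto.comp hsub).pow 2)
  have c3 : ContinuousAt (fun u : ℝ => (lm+u)^(α-2)) lp :=
    c1.rpow_const (Or.inl (by positivity))
  have T3 : Tendsto (fun s : ℝ => (lm + (lp - s))^(α-2)) (𝓝[>] (0:ℝ))
      (𝓝 ((lm+lp)^(α-2))) := c3.tendsto.comp hsub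
  have final : Tendsto (fun s : ℝ => M (lp - s) * (s ^ (2-α) * (P1 (lp - s))^2 +
      ((1:ℝ) + s ^ (2-α) * (lm + (lp - s)) ^ (α-2)) / D)) (𝓝[>] (0:ℝ))
      (𝓝 (M lp * (0 * (P1 lp)^2 + ((1:ℝ) + 0 * (lm+lp)^(α-2)) / D))) :=
    T1.mul (T2.add (((tendsto_const_nhds (α := ℝ)).add (hrpow0.mul T3)).div_const D))
  have hval : M lp / D = M lp * (0 * (P1 lp)^2 + ((1:ℝ) + 0 * (lm+lp)^(α-2)) / D) := by
    ring
  rw [hval]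
  exact Tendsto.congr' (heq.mono fun s h => h.symm) final
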